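/- Let n ≥ 1 and λ ∈ (0,1), and let d_j denote the Euclidean norm of the j-th column of C_λ. Then ∑_{j=1}^{n} d_j² + ∑_{j=1}^{n−1} (n − j)·(d_j − λ d_{j+1})² ≤ d_1² · (n + (1 − λ)²·n(n−1)/2). Consequently, under single participation (k = 1), the RMSE of the column-normalized DP-λCGD factorization (strategy matrix C_λ D^{-1}, which has sensitivity 1) is at most the RMSE of the unnormalized DP-λCGD factorization (strategy matrix C_λ, which has sensitivity d_1): ‖A D C_λ^{-1}‖_F ≤ d_1 · ‖A C_λ^{-1}‖_F. -/

import Mathlib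

open Finset

/-- Euclidean norm of a vector in `ℝⁿ`. -/
noncomputable def norm2 {n : ℕ} (v : Fin n → ℝ) : ℝ := Real.sqrt (∑ i, v i ^ 2)

/-- Frobenius norm of a square matrix. -/
noncomputable def frob {n : ℕ} (B : Matrix (Fin n) (Fin n) ℝ) : ℝ :=
  Real.sqrt (∑ i, ∑ j, B i j ^ 2)

/-- `‖B‖_{2→∞}`: the maximum Euclidean norm of a row of `B`. -/
noncomputable def rowMax {n : ℕ} (B : Matrix (Fin n) (Fin n) ℝ) : ℝ :=
  ⨆ i : Fin n, norm2 (fun j => B i j)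

/-- The `n × n` prefix-sum matrix: lower triangular, all entries on or below the diagonal are 1. -/
def Amat (n : ℕ) : Matrix (Fin n) (Fin n) ℝ :=
  fun i j => if (j : ℕ) ≤ (i : ℕ) then 1 else 0

/-- The DP-λCGD strategy matrix `C_λ`: lower triangular Toeplitz with `(C_λ)_{ij} = λ^{i-j}`. -/
noncomputable def Cmat (n : ℕ) (l : ℝ) : Matrix (Fin n) (Fin n) ℝ :=
  fun i j => if (j : ℕ) ≤ (i : ℕ) then l ^ ((i : ℕ) - (j : ℕ)) else 0

/-- The inverse `C_λ⁻¹`: ones on the diagonal, `-λ` on the first subdiagonal, zero elsewhere. -/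
noncomputable def Cinvmat (n : ℕ) (l : ℝ) : Matrix (Fin n) (Fin n) ℝ :=
  fun i j => if (i : ℕ) = (j : ℕ) then 1 else if (i : ℕ) = (j : ℕ) + 1 then -l else 0

/-- `sens_{k,b}(C)`: Euclidean norm of `∑_{j=0}^{k-1} C_{:,jb+1}` (columns 1-indexed, so the
column of 1-based index `j*b + 1` is the column of `Fin`-index `j*b`). -/
noncomputable def sens (n k b : ℕ) (C : Matrix (Fin n) (Fin n) ℝ) : ℝ :=
  norm2 (fun i => ∑ j ∈ Finset.range k, if h : j * b < n then C i ⟨j * b, h⟩ else 0)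

/-- `d_j`: Euclidean norm of the `j`-th column of `C_λ`. -/
noncomputable def dcol (n : ℕ) (l : ℝ) (j : Fin n) : ℝ :=
  norm2 (fun i => Cmat n l i j)

/-- The column-normalized DP-λCGD strategy matrix `C̃ = C_λ D⁻¹`. -/
noncomputable def Ctil (n : ℕ) (l : ℝ) : Matrix (Fin n) (Fin n) ℝ :=
  Cmat n l * (Matrix.diagonal (dcol n l))⁻¹

lemma sum_id_real (m : ℕ) : ∑ j ∈ range m, (j:ℝ) = m*(m-1)/2 := by
  induction m with
  | zero => simp
  | succ k ih => rw [sum_range_succ, ih]; push_cast; ring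

lemma gauss (n : ℕ) (hn : 1 ≤ n) :
    ∑ j ∈ range (n-1), ((n:ℝ) - ((j:ℝ)+1)) = (n:ℝ)*((n:ℝ)-1)/2 := by
  obtain ⟨m, rfl⟩ : ∃ m, n = m + 1 := ⟨n-1, by omega⟩
  simp only [Nat.add_sub_cancel]
  rw [Finset.sum_sub_distrib, Finset.sum_add_distrib, sum_id_real, Finset.sum_const,
    Finset.sum_const]
  simp only [Finset.card_range, nsmul_eq_mul]
  push_cast; ring

lemma geom_id (q : ℝ) (n : ℕ) :
    ∑ j ∈ range n, (∑ t ∈ range (j+1), q^t) + ∑ m ∈ range n, (m:ℝ) * q^m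
      = (n:ℝ) * ∑ t ∈ range n, q^t := by
  induction n with
  | zero => simp
  | succ k ih =>
    rw [sum_range_succ, sum_range_succ (fun m => (m:ℝ)*q^m), sum_range_succ (fun t => q^t)]
    push_cast
    linear_combination ih

lemma dcol_sq (n : ℕ) (l : ℝ) (j : Fin n) :
    dcol n l j ^ 2 = ∑ t ∈ range (n - (j:ℕ)), (l^2) ^ t := by
  rw [dcol, norm2, Real.sq_sqrt (by positivity)]
  simp only [Cmat]
  rw [Fin.sum_univ_eq_sum_range (fun m => (if (j:ℕ) ≤ m then l ^ (m - (j:ℕ)) else 0)^2) n]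
  rw [Finset.range_eq_Ico, ← Finset.sum_Ico_consecutive _ (Nat.zero_le (j:ℕ)) (le_of_lt j.2)]
  have h1 : ∑ m ∈ Finset.Ico 0 (j:ℕ), (if (j:ℕ) ≤ m then l ^ (m - (j:ℕ)) else 0)^2 = 0 := by
    apply Finset.sum_eq_zero
    intro m hm
    simp only [Finset.mem_Ico] at hm
    rw [if_neg (by omega)]
    ring
  rw [h1, zero_add, Finset.sum_Ico_eq_sum_range]
  apply Finset.sum_congr rfl
  intro t _
  rw [if_pos (by omega)]
  have : (j:ℕ) + t - (j:ℕ) = t := by omega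
  rw [this, ← pow_mul, mul_comm t 2, pow_mul]

lemma dcol_nonneg (n : ℕ) (l : ℝ) (j : Fin n) : 0 ≤ dcol n l j := Real.sqrt_nonneg _

lemma dcol_eq (n : ℕ) (l : ℝ) (j : Fin n) :
    dcol n l j = Real.sqrt (∑ t ∈ range (n - (j:ℕ)), (l^2) ^ t) := by
  rw [← dcol_sq n l j, Real.sqrt_sq (dcol_nonneg n l j)]

lemma G_mono (l : ℝ) {m m' : ℕ} (h : m ≤ m') :
    ∑ t ∈ range m, (l^2)^t ≤ ∑ t ∈ range m', (l^2)^t :=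
  Finset.sum_le_sum_of_subset_of_nonneg (Finset.range_subset_range.2 h)
    (fun t _ _ => by positivity)

lemma dcol_mono (n : ℕ) (l : ℝ) (j k : Fin n) (h : (j:ℕ) ≤ (k:ℕ)) :
    dcol n l k ≤ dcol n l j := by
  rw [dcol_eq, dcol_eq]
  exact Real.sqrt_le_sqrt (G_mono l (by omega))

lemma key (a b c L : ℝ) (hL : 0 ≤ L) (hb : 0 ≤ b) (hba : b ≤ a) (hbc : b ≤ c) :
    (a - L*b)^2 ≤ (1-L)^2*c^2 + (a^2 - b^2) := by
  nlinarith [mul_nonneg (mul_nonneg hL hb) (sub_nonneg.2 hba),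
    mul_nonneg (mul_nonneg (sq_nonneg (1-L)) (add_nonneg hb (hb.trans hbc))) (sub_nonneg.2 hbc)]


lemma entry_eq (n : ℕ) (l : ℝ) (v : Fin n → ℝ) (i j : Fin n) :
    (Amat n * Matrix.diagonal v * Cinvmat n l) i j =
      (if (j:ℕ) ≤ (i:ℕ) then v j else 0) -
      l * (if h : (j:ℕ)+1 < n then (if (j:ℕ)+1 ≤ (i:ℕ) then v ⟨(j:ℕ)+1, h⟩ else 0) else 0) := by
  rw [Matrix.mul_apply]
  have hpt : ∀ k : Fin n, (Amat n * Matrix.diagonal v) i k * Cinvmat n l k j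
      = (if (k:ℕ) = (j:ℕ) then (if (j:ℕ) ≤ (i:ℕ) then v k else 0) else 0)
        + (if (k:ℕ) = (j:ℕ)+1 then -(l * (if (j:ℕ)+1 ≤ (i:ℕ) then v k else 0)) else 0) := by
    intro k
    rw [Matrix.mul_diagonal]
    simp only [Amat, Cinvmat]
    split_ifs
    all_goals try ring
    all_goals (exfalso; omega)
  rw [Finset.sum_congr rfl (fun k _ => hpt k), Finset.sum_add_distrib]
  have hs1 : ∑ k : Fin n, (if (k:ℕ) = (j:ℕ) then (if (j:ℕ) ≤ (i:ℕ) then v k else 0) else 0)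
      = (if (j:ℕ) ≤ (i:ℕ) then v j else 0) := by
    rw [Finset.sum_eq_single_of_mem j (Finset.mem_univ j)
      (fun b _ hb => if_neg (fun h => hb (Fin.ext h)))]
    rw [if_pos rfl]
  have hs2 : ∑ k : Fin n, (if (k:ℕ) = (j:ℕ)+1 then -(l * (if (j:ℕ)+1 ≤ (i:ℕ) then v k else 0)) else 0)
      = -(l * (if h : (j:ℕ)+1 < n then (if (j:ℕ)+1 ≤ (i:ℕ) then v ⟨(j:ℕ)+1, h⟩ else 0) else 0)) := by
    by_cases h : (j:ℕ)+1 < n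
    · rw [dif_pos h, Finset.sum_eq_single_of_mem ⟨(j:ℕ)+1, h⟩ (Finset.mem_univ _)
        (fun b _ hb => if_neg (fun hb2 => hb (Fin.ext hb2)))]
      rw [if_pos rfl]
    · rw [dif_neg h]
      rw [Finset.sum_eq_zero (fun k _ => if_neg (fun hk => by omega))]
      simp
  rw [hs1, hs2]
  ring

lemma count_gt (n : ℕ) (j : Fin n) (b : ℝ) :
    ∑ i : Fin n, (if (j:ℕ) < (i:ℕ) then b else 0) = ((n:ℝ) - ((j:ℕ)+1)) * b := by
  rw [Fin.sum_univ_eq_sum_range (fun m => if (j:ℕ) < m then b else 0) n]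
  rw [← Finset.sum_filter]
  have hf : (range n).filter (fun m => (j:ℕ) < m) = Finset.Ico ((j:ℕ)+1) n := by
    ext m; simp [Finset.mem_Ico, Finset.mem_filter, Finset.mem_range]; omega
  rw [hf, Finset.sum_const, Nat.card_Ico, nsmul_eq_mul]
  have : ((n - ((j:ℕ)+1) : ℕ) : ℝ) = (n:ℝ) - ((j:ℕ)+1) := by
    have := j.2; push_cast [Nat.cast_sub (by omega : (j:ℕ)+1 ≤ n)]; ring
  rw [this]

lemma col_sum (n : ℕ) (l : ℝ) (v : Fin n → ℝ) (j : Fin n) :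
    ∑ i : Fin n, ((Amat n * Matrix.diagonal v * Cinvmat n l) i j)^2
      = v j ^ 2 + (if h : (j:ℕ)+1 < n then
          ((n:ℝ) - ((j:ℕ)+1)) * (v j - l * v ⟨(j:ℕ)+1, h⟩)^2 else 0) := by
  by_cases h : (j:ℕ)+1 < n
  · rw [dif_pos h]
    have hpt : ∀ i : Fin n, ((Amat n * Matrix.diagonal v * Cinvmat n l) i j)^2
        = (if i = j then v j ^2 else 0) + (if (j:ℕ) < (i:ℕ) then (v j - l * v ⟨(j:ℕ)+1, h⟩)^2 else 0) := by
      intro i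
      rw [entry_eq, dif_pos h]
      rcases eq_or_ne i j with rfl | hij
      · rw [if_pos rfl, if_pos (le_refl _), if_neg (by omega), if_neg (by omega)]
        ring
      · rw [if_neg hij]
        have hne : (i:ℕ) ≠ (j:ℕ) := fun hc => hij (Fin.ext hc)
        by_cases h2 : (j:ℕ) < (i:ℕ)
        · rw [if_pos h2, if_pos (by omega), if_pos (by omega)]; ring
        · rw [if_neg h2, if_neg (by omega), if_neg (by omega)]; ring
    rw [Finset.sum_congr rfl (fun i _ => hpt i), Finset.sum_add_distrib,
      Finset.sum_ite_eq' univ j (fun _ => v j ^2), if_pos (Finset.mem_univ j), count_gt]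
  · rw [dif_neg h]
    have hpt : ∀ i : Fin n, ((Amat n * Matrix.diagonal v * Cinvmat n l) i j)^2
        = (if i = j then v j ^2 else 0) := by
      intro i
      rw [entry_eq, dif_neg h]
      rcases eq_or_ne i j with rfl | hij
      · rw [if_pos rfl, if_pos (le_refl _)]; ring
      · have hne : (i:ℕ) ≠ (j:ℕ) := fun hc => hij (Fin.ext hc)
        have hj : (j:ℕ) = n - 1 := by have := j.2; omega
        rw [if_neg hij, if_neg (by have := i.2; omega)]
        ring
    rw [Finset.sum_congr rfl (fun i _ => hpt i),
      Finset.sum_ite_eq' univ j (fun _ => v j ^2), if_pos (Finset.mem_univ j)]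
    ring

lemma sum_range_pred (n : ℕ) (hn : 1 ≤ n) (F : ℕ → ℝ) (h0 : F (n-1) = 0) :
    ∑ m ∈ range n, F m = ∑ m ∈ range (n-1), F m := by
  obtain ⟨k, rfl⟩ : ∃ k, n = k + 1 := ⟨n-1, by omega⟩
  simp only [Nat.add_sub_cancel] at h0 ⊢
  rw [Finset.sum_range_succ, h0, add_zero]

lemma frob_sq_eq (n : ℕ) (hn : 1 ≤ n) (l : ℝ) (v : Fin n → ℝ) :
    ∑ i : Fin n, ∑ j : Fin n, ((Amat n * Matrix.diagonal v * Cinvmat n l) i j)^2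
      = (∑ j : Fin n, v j ^ 2) +
        ∑ j ∈ range (n-1), (if h : j + 1 < n then
          ((n:ℝ) - ((j:ℝ)+1)) * (v ⟨j, Nat.lt_of_succ_lt h⟩ - l * v ⟨j+1, h⟩)^2 else 0) := by
  rw [Finset.sum_comm]
  rw [Finset.sum_congr rfl (fun j _ => col_sum n l v j), Finset.sum_add_distrib]
  congr 1
  rw [Fin.sum_univ_eq_sum_range (fun m => if h : m + 1 < n then
      ((n:ℝ) - ((m:ℝ)+1)) * (v ⟨m, Nat.lt_of_succ_lt h⟩ - l * v ⟨m+1, h⟩)^2 else 0) n]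
  exact sum_range_pred n hn _ (dif_neg (by omega))

lemma part1 (n : ℕ) (hn : 1 ≤ n) (l : ℝ) (hl : l ∈ Set.Ioo (0 : ℝ) 1) :
    (∑ j : Fin n, dcol n l j ^ 2) +
      (∑ j ∈ Finset.range (n - 1), if h : j + 1 < n then
        ((n : ℝ) - ((j : ℝ) + 1)) *
          (dcol n l ⟨j, Nat.lt_of_succ_lt h⟩ - l * dcol n l ⟨j + 1, h⟩) ^ 2 else 0) ≤
      dcol n l ⟨0, hn⟩ ^ 2 * ((n : ℝ) + (1 - l) ^ 2 * (n : ℝ) * ((n : ℝ) - 1) / 2) := by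
  set c := dcol n l ⟨0, hn⟩ with hc
  -- per-term bound
  have hstep : ∀ j ∈ range (n-1),
      (if h : j + 1 < n then ((n : ℝ) - ((j : ℝ) + 1)) *
          (dcol n l ⟨j, Nat.lt_of_succ_lt h⟩ - l * dcol n l ⟨j + 1, h⟩) ^ 2 else 0)
      ≤ ((n : ℝ) - ((j:ℝ) + 1)) * ((1-l)^2 * c^2 + (l^2)^(n-1-j)) := by
    intro j hj
    rw [Finset.mem_range] at hj
    have h : j + 1 < n := by omega
    rw [dif_pos h]
    have hcoef : (0:ℝ) ≤ (n:ℝ) - ((j:ℝ)+1) := by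
      have : ((j:ℝ)+1) ≤ (n:ℝ) := by exact_mod_cast (by omega : j+1 ≤ n)
      linarith
    apply mul_le_mul_of_nonneg_left _ hcoef
    have hab : dcol n l ⟨j, Nat.lt_of_succ_lt h⟩ ^ 2 - dcol n l ⟨j+1, h⟩ ^ 2 = (l^2)^(n-1-j) := by
      rw [dcol_sq, dcol_sq]
      simp only []
      rw [show n - ((⟨j, Nat.lt_of_succ_lt h⟩ : Fin n):ℕ) = (n - ((⟨j+1, h⟩ : Fin n):ℕ)) + 1 from by simp; omega,
        Finset.sum_range_succ]
      rw [show n - ((⟨j+1, h⟩ : Fin n):ℕ) = n - 1 - j from by simp; omega]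
      ring
    have hk := key (dcol n l ⟨j, Nat.lt_of_succ_lt h⟩) (dcol n l ⟨j+1, h⟩) c l hl.1.le
      (dcol_nonneg n l _) (dcol_mono n l ⟨j, Nat.lt_of_succ_lt h⟩ ⟨j+1, h⟩ (by simp))
      (dcol_mono n l ⟨0, hn⟩ ⟨j+1, h⟩ (by simp))
    rw [hab] at hk
    exact hk
  have hsum := Finset.sum_le_sum hstep
  -- split the bound sum
  have hsplit : ∑ j ∈ range (n-1), ((n : ℝ) - ((j:ℝ) + 1)) * ((1-l)^2 * c^2 + (l^2)^(n-1-j))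
      = (1-l)^2 * c^2 * ((n:ℝ)*((n:ℝ)-1)/2)
        + ∑ j ∈ range (n-1), ((n : ℝ) - ((j:ℝ) + 1)) * (l^2)^(n-1-j) := by
    simp only [mul_add]
    rw [Finset.sum_add_distrib]
    congr 1
    rw [Finset.sum_congr rfl (fun j (_ : j ∈ range (n-1)) =>
      mul_comm ((n:ℝ) - ((j:ℝ)+1)) ((1-l)^2 * c^2)), ← Finset.mul_sum, gauss n hn]
  -- main identity
  have hC : (∑ j : Fin n, dcol n l j ^ 2)
      + ∑ j ∈ range (n-1), ((n : ℝ) - ((j:ℝ) + 1)) * (l^2)^(n-1-j) = (n:ℝ) * c^2 := by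
    have c1 : (∑ j : Fin n, dcol n l j ^ 2)
        = ∑ j ∈ range n, (∑ t ∈ range (n - j), (l^2)^t) := by
      rw [Finset.sum_congr rfl (fun j (_ : j ∈ univ) => dcol_sq n l j)]
      exact Fin.sum_univ_eq_sum_range (fun m => ∑ t ∈ range (n - m), (l^2)^t) n
    have c2 : (∑ j ∈ range n, (∑ t ∈ range (n - j), (l^2)^t))
        = ∑ j ∈ range n, (∑ t ∈ range (j+1), (l^2)^t) := by
      rw [← Finset.sum_range_reflect (fun m => ∑ t ∈ range (m+1), (l^2)^t) n]
      exact Finset.sum_congr rfl (fun j hj => by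
        rw [Finset.mem_range] at hj
        rw [show n - 1 - j + 1 = n - j from by omega])
    have c3 : ∑ j ∈ range (n-1), ((n : ℝ) - ((j:ℝ) + 1)) * (l^2)^(n-1-j)
        = ∑ j ∈ range (n-1), (((j:ℕ)+1 : ℝ)) * (l^2)^(j+1) := by
      rw [← Finset.sum_range_reflect (fun m => (((m:ℕ)+1 : ℝ)) * (l^2)^(m+1)) (n-1)]
      refine Finset.sum_congr rfl (fun j hj => ?_)
      rw [Finset.mem_range] at hj
      rw [show n - 1 - 1 - j + 1 = n - 1 - j from by omega]
      congr 1
      have h2 : n - 1 - 1 - j = n - (j+2) := by omega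
      rw [h2, Nat.cast_sub (by omega : j+2 ≤ n)]
      push_cast
      ring
    have c4 : ∑ j ∈ range (n-1), (((j:ℕ)+1 : ℝ)) * (l^2)^(j+1)
        = ∑ m ∈ range n, (m:ℝ) * (l^2)^m := by
      have h5 := Finset.sum_range_succ' (fun m => (m:ℝ)*(l^2)^m) (n-1)
      rw [show n-1+1 = n from by omega] at h5
      rw [h5]
      push_cast
      simp
    have hc2 : c^2 = ∑ t ∈ range n, (l^2)^t := by
      rw [hc, dcol_sq]
      norm_num
    rw [c1, c2, c3, c4, hc2]
    exact geom_id (l^2) n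
  have hrhs : c^2*((n:ℝ) + (1-l)^2*(n:ℝ)*((n:ℝ)-1)/2)
      = (n:ℝ)*c^2 + (1-l)^2*c^2*((n:ℝ)*((n:ℝ)-1)/2) := by ring
  linarith [hsum, hsplit, hC, hrhs]

lemma frobAC (n : ℕ) (hn : 1 ≤ n) (l : ℝ) :
    ∑ i : Fin n, ∑ j : Fin n, ((Amat n * Cinvmat n l) i j)^2
      = (n:ℝ) + (1-l)^2*(n:ℝ)*((n:ℝ)-1)/2 := by
  have hAC : Amat n * Cinvmat n l
      = Amat n * Matrix.diagonal (fun _ : Fin n => (1:ℝ)) * Cinvmat n l := by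
    rw [Matrix.diagonal_one, Matrix.mul_one]
  rw [hAC, frob_sq_eq n hn l (fun _ => 1)]
  have h2 : ∑ j ∈ range (n-1), (if h : j+1 < n then
      ((n:ℝ) - ((j:ℝ)+1)) * ((1:ℝ) - l * 1)^2 else 0)
      = ∑ j ∈ range (n-1), ((n:ℝ) - ((j:ℝ)+1)) * (1-l)^2 :=
    Finset.sum_congr rfl (fun j hj => by
      rw [Finset.mem_range] at hj
      rw [dif_pos (by omega : j + 1 < n)]; ring)
  rw [h2, ← Finset.sum_mul, gauss n hn]
  simp
  ring


/-- ∑_j d_j² + ∑_{j=1}^{n−1}(n−j)(d_j − λd_{j+1})² ≤ d₁²(n + (1−λ)²n(n−1)/2),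
and consequently the single-participation RMSE of the column-normalized DP-λCGD
factorization is at most that of the unnormalized one:
‖A D C_λ⁻¹‖_F ≤ d₁ · ‖A C_λ⁻¹‖_F. -/
theorem stmt_16 (n : ℕ) (hn : 1 ≤ n) (l : ℝ) (hl : l ∈ Set.Ioo (0 : ℝ) 1) :
    (∑ j : Fin n, dcol n l j ^ 2) +
      (∑ j ∈ Finset.range (n - 1), if h : j + 1 < n then
        ((n : ℝ) - ((j : ℝ) + 1)) *
          (dcol n l ⟨j, by omega⟩ - l * dcol n l ⟨j + 1, h⟩) ^ 2 else 0) ≤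
      dcol n l ⟨0, hn⟩ ^ 2 * ((n : ℝ) + (1 - l) ^ 2 * (n : ℝ) * ((n : ℝ) - 1) / 2) ∧
    frob (Amat n * Matrix.diagonal (dcol n l) * Cinvmat n l) ≤
      dcol n l ⟨0, hn⟩ * frob (Amat n * Cinvmat n l) := by
  refine ⟨part1 n hn l hl, ?_⟩
  have hp1 := part1 n hn l hl
  simp only [frob]
  rw [frob_sq_eq n hn l (dcol n l), frobAC n hn l]
  calc Real.sqrt ((∑ j : Fin n, dcol n l j ^ 2) +
        ∑ j ∈ Finset.range (n - 1), (if h : j + 1 < n then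
          ((n : ℝ) - ((j : ℝ) + 1)) *
            (dcol n l ⟨j, by omega⟩ - l * dcol n l ⟨j + 1, h⟩) ^ 2 else 0))
      ≤ Real.sqrt (dcol n l ⟨0, hn⟩ ^ 2 *
          ((n : ℝ) + (1 - l) ^ 2 * (n : ℝ) * ((n : ℝ) - 1) / 2)) := Real.sqrt_le_sqrt hp1
    _ = dcol n l ⟨0, hn⟩ *
          Real.sqrt ((n : ℝ) + (1 - l) ^ 2 * (n : ℝ) * ((n : ℝ) - 1) / 2) := by
        rw [Real.sqrt_mul (sq_nonneg _), Real.sqrt_sq (dcol_nonneg n l _)]
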